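/- Let a > 0 and consider events in (d+1)-dimensional Minkowski spacetime (d ≥ 2): (x_A,t_A) = ((-a,0,...,0), 0), (x_C,t_C) = ((a,0,...,0), 0), and (x_B,t_B) = ((x_B, y_B, 0,...,0), t_B) with |x_B| ≥ a. Then L_>(x_A,t_A) ∩ L_>(x_C,t_C) ⊆ L_>(x_B,t_B) if and only if (x_A,t_A) ∈ L_≥(x_B,t_B) or (x_C,t_C) ∈ L_≥(x_B,t_B) (i.e. at least one of the first two events lies in the inclusive future lightcone of (x_B,t_B)). -/

import Mathlib

open scoped InnerProductSpace


/-- The (strict) future lightcone of an event in (d+1)D Minkowski spacetime. -/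
def futureCone {d : ℕ} (x0 : EuclideanSpace ℝ (Fin d)) (t0 : ℝ) :
    Set (EuclideanSpace ℝ (Fin d) × ℝ) :=
  {p | ‖p.1 - x0‖ ≤ p.2 - t0 ∧ t0 < p.2}

lemma cone_mono_aux {d : ℕ} (A B : EuclideanSpace ℝ (Fin d)) (tB : ℝ)
    (h : ‖A - B‖ ≤ 0 - tB) : futureCone A 0 ⊆ futureCone B tB := by
  rintro ⟨x, t⟩ ⟨h1, h2⟩
  have htri : ‖x - B‖ ≤ ‖x - A‖ + ‖A - B‖ := norm_sub_le_norm_sub_add_norm_sub x A B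
  have hn : (0:ℝ) ≤ ‖A - B‖ := norm_nonneg _
  simp only [futureCone, Set.mem_setOf_eq] at h1 h2 ⊢
  constructor
  · linarith
  · linarith

lemma key_aux {d : ℕ} (A C B : EuclideanSpace ℝ (Fin d)) (tB : ℝ)
    (hD : C ≠ A) (hin : ⟪C - B, C - A⟫_ℝ ≤ 0)
    (hsub : futureCone A 0 ∩ futureCone C 0 ⊆ futureCone B tB) :
    ‖C - B‖ ≤ 0 - tB := by
  set D : ℝ := ‖C - A‖ with hDdef
  have hD0 : 0 < D := norm_pos_iff.mpr (sub_ne_zero.mpr hD)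
  set c : ℝ := ‖C - B‖ with hcdef
  rcases eq_or_lt_of_le (norm_nonneg (C - B)) with hc0 | hc0
  · -- c = 0 : B = C, use the point (A, D)
    have hBC : C = B := sub_eq_zero.mp (norm_eq_zero.mp hc0.symm)
    have hmem : ((A, D) : EuclideanSpace ℝ (Fin d) × ℝ) ∈
        futureCone A 0 ∩ futureCone C 0 := by
      constructor
      · refine ⟨?_, hD0⟩
        show ‖A - A‖ ≤ D - 0
        simp; linarith
      · refine ⟨?_, hD0⟩
        show ‖A - C‖ ≤ D - 0
        rw [norm_sub_rev]; simp [hDdef]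
    obtain ⟨h1, _⟩ := hsub hmem
    have : ‖A - B‖ = D := by rw [← hBC, norm_sub_rev]
    rw [this] at h1
    linarith
  · -- c > 0
    have hkey : ∀ ε : ℝ, 0 < ε → c + tB ≤ 0 + ε := by
      intro ε hε
      set s : ℝ := D^2 / (2 * ε * c) with hsdef
      have hs0 : 0 < s := by positivity
      set x : EuclideanSpace ℝ (Fin d) := C + s • (C - B) with hxdef
      set t : ℝ := s * c + ε with htdef
      have hxC : x - C = s • (C - B) := by rw [hxdef]; abel
      have hnxC : ‖x - C‖ = s * c := by
        rw [hxC, norm_smul, Real.norm_eq_abs, abs_of_pos hs0, hcdef]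
      have hxA : x - A = s • (C - B) + (C - A) := by rw [hxdef]; abel
      have hxB : x - B = (s + 1) • (C - B) := by
        rw [hxdef, add_smul, one_smul]; abel
      have hnxB : ‖x - B‖ = (s + 1) * c := by
        rw [hxB, norm_smul, Real.norm_eq_abs, abs_of_pos (by linarith), hcdef]
      have hsq : ‖x - A‖^2 = (s*c)^2 + 2 * (s * ⟪C - B, C - A⟫_ℝ) + D^2 := by
        rw [hxA, norm_add_sq_real, real_inner_smul_left, norm_smul,
          Real.norm_eq_abs, abs_of_pos hs0, ← hcdef, ← hDdef, mul_pow]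
      have hsc : 2 * (s * c) * ε = D^2 := by
        rw [hsdef]; field_simp; ring_nf; exact mul_inv_cancel₀ (ne_of_gt hc0)
      have ht0 : 0 < t := by positivity
      have hnxA : ‖x - A‖ ≤ t := by
        nlinarith [norm_nonneg (x - A), sq_nonneg (‖x - A‖ - t)]
      have hmem : (x, t) ∈ futureCone A 0 ∩ futureCone C 0 := by
        constructor
        · exact ⟨by simpa using hnxA, ht0⟩
        · refine ⟨?_, ht0⟩
          show ‖x - C‖ ≤ t - 0
          rw [hnxC]; linarith
      obtain ⟨h1, _⟩ := hsub hmem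
      have h1' : (s + 1) * c ≤ t - tB := by rwa [hnxB] at h1
      rw [htdef] at h1'
      nlinarith
    have := le_of_forall_pos_le_add hkey
    linarith

/-- For `x_A = (-a,0,…,0)`, `x_C = (a,0,…,0)` at time `0` and `x_B = (x_B, y_B, 0,…,0)` with
`|x_B| ≥ a`, the intersection of the future lightcones of the first two events is contained in
the future lightcone of `(x_B, t_B)` iff at least one of the first two events lies in the
inclusive future lightcone of `(x_B, t_B)`. -/
theorem inter_subset_cone_iff_of_outside {d : ℕ} (hd : 2 ≤ d) (a xB yB tB : ℝ)
    (ha : 0 < a) (hx : a ≤ |xB|) :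
    (futureCone (EuclideanSpace.single (⟨0, by omega⟩ : Fin d) (-a)) 0 ∩
       futureCone (EuclideanSpace.single (⟨0, by omega⟩ : Fin d) a) 0 ⊆
     futureCone
       (EuclideanSpace.single (⟨0, by omega⟩ : Fin d) xB +
        EuclideanSpace.single (⟨1, by omega⟩ : Fin d) yB) tB)
    ↔ (‖EuclideanSpace.single (⟨0, by omega⟩ : Fin d) (-a) -
          (EuclideanSpace.single (⟨0, by omega⟩ : Fin d) xB +
           EuclideanSpace.single (⟨1, by omega⟩ : Fin d) yB)‖ ≤ 0 - tB ∨
       ‖EuclideanSpace.single (⟨0, by omega⟩ : Fin d) a -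
          (EuclideanSpace.single (⟨0, by omega⟩ : Fin d) xB +
           EuclideanSpace.single (⟨1, by omega⟩ : Fin d) yB)‖ ≤ 0 - tB) := by
  have h0d : 0 < d := by omega
  have h1d : 1 < d := by omega
  set e0 : Fin d := ⟨0, h0d⟩ with he0
  set e1 : Fin d := ⟨1, h1d⟩ with he1
  set A : EuclideanSpace ℝ (Fin d) := EuclideanSpace.single e0 (-a) with hA
  set C : EuclideanSpace ℝ (Fin d) := EuclideanSpace.single e0 a with hC
  set B : EuclideanSpace ℝ (Fin d) :=
    EuclideanSpace.single e0 xB + EuclideanSpace.single e1 yB with hB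
  have hne : e0 ≠ e1 := by simp [he0, he1, Fin.ext_iff]
  constructor
  · intro hsub
    have hCA : C ≠ A := by
      intro h
      have := congrArg (· e0) h
      simp [hC, hA, EuclideanSpace.single_apply] at this
      linarith
    rcases le_abs.mp hx with hxb | hxb
    · -- a ≤ xB : nearest is C
      right
      refine key_aux A C B tB hCA ?_ hsub
      have : ⟪C - B, C - A⟫_ℝ = 2 * a * (a - xB) := by
        simp [hC, hA, hB, inner_sub_left, inner_sub_right, inner_add_left,
          inner_add_right, EuclideanSpace.inner_single_left,
          EuclideanSpace.inner_single_right, EuclideanSpace.single_apply,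
          hne, hne.symm]
        ring
      rw [this]
      nlinarith
    · -- a ≤ -xB : nearest is A
      left
      rw [Set.inter_comm] at hsub
      refine key_aux C A B tB hCA.symm ?_ hsub
      have : ⟪A - B, A - C⟫_ℝ = 2 * a * (a + xB) := by
        simp [hC, hA, hB, inner_sub_left, inner_sub_right, inner_add_left,
          inner_add_right, EuclideanSpace.inner_single_left,
          EuclideanSpace.inner_single_right, EuclideanSpace.single_apply,
          hne, hne.symm]
        ring
      rw [this]
      nlinarith
  · intro h
    rcases h with h | h
    · intro p hp
      exact cone_mono_aux A B tB h hp.1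
    · intro p hp
      exact cone_mono_aux C B tB h hp.2
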